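/- Let f be a stable binary form of odd degree k ≥ 5 with trivial reduced stabilizer, and let q₀, q₁ be covariants of order 1 of Sym^k(W*) that are linearly independent at f. Then f̃ = ∑_{i=0}^k binom(k,i)·(q₀(f)^i q₁(f)^{k−i}, f)_k · X₀^i X₁^{k−i}, regarded as a binary form in X₀, X₁, is GL₂-equivalent to f. -/

import Mathlib

open MvPolynomial Matrix

noncomputable section

def derivOp (K : Type*) [Field K] {σ : Type*} [Fintype σ] [DecidableEq σ]
    (a : σ →₀ ℕ) : Module.End K (MvPolynomial σ K) :=
  (Finset.univ.toList.map fun j : σ => ((MvPolynomial.pderiv j).toLinearMap ^ (a j))).prod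

def bexp (a b : ℕ) : Fin 2 →₀ ℕ := Finsupp.equivFunOnFinite.symm ![a, b]

/-- The transvectant of level `l` of two binary forms. -/
def transvect {K : Type*} [Field K] (l : ℕ)
    (f g : MvPolynomial (Fin 2) K) : MvPolynomial (Fin 2) K :=
  ∑ i ∈ Finset.range (l + 1),
    ((-1 : K) ^ i * (l.choose i : K)) •
      (derivOp K (bexp i (l - i)) f * derivOp K (bexp (l - i) i) g)

def polyAct {K : Type*} [Field K] {σ : Type*} [Fintype σ] [DecidableEq σ]
    (N : Matrix σ σ K) (P : MvPolynomial σ K) : MvPolynomial σ K :=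
  bind₁ (fun i => ∑ j, N i j • X j) P

def actDual {K : Type*} [Field K] {σ : Type*} [Fintype σ] [DecidableEq σ]
    (M : Matrix σ σ K) (P : MvPolynomial σ K) : MvPolynomial σ K :=
  polyAct M⁻¹ P

def IsCovariant {K : Type*} [Field K] {m : ℕ} (k r dC : ℕ)
    (C : MvPolynomial (Fin m) K → MvPolynomial (Fin m) K) : Prop :=
  (∀ f : MvPolynomial (Fin m) K, f.IsHomogeneous k → (C f).IsHomogeneous r)
  ∧ (∀ (c : K) (f : MvPolynomial (Fin m) K), f.IsHomogeneous k →
      C (c • f) = c ^ dC • C f)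
  ∧ (∀ M : Matrix (Fin m) (Fin m) K, M.det = 1 →
      ∀ f : MvPolynomial (Fin m) K, f.IsHomogeneous k →
        C (actDual M f) = actDual M (C f))

def MonIdx (m d : ℕ) : Type := {v : Fin m → ℕ // v ∈ Finset.Nat.antidiagonalTuple m d}

instance (m d : ℕ) : Fintype (MonIdx m d) := by unfold MonIdx; infer_instance
instance (m d : ℕ) : DecidableEq (MonIdx m d) := by unfold MonIdx; infer_instance

def OrbitSL {K : Type*} [Field K] {m : ℕ} (f : MvPolynomial (Fin m) K) :
    Set (MvPolynomial (Fin m) K) :=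
  {g | ∃ M : Matrix (Fin m) (Fin m) K, M.det = 1 ∧ g = actDual M f}

def ZClosed {K : Type*} [Field K] {m : ℕ} (N : ℕ)
    (A : Set (MvPolynomial (Fin m) K)) : Prop :=
  ∃ S : Set (MvPolynomial (MonIdx m N) K),
    A = {P | P.IsHomogeneous N ∧ ∀ g ∈ S,
      eval (fun v : MonIdx m N => P.coeff (Finsupp.equivFunOnFinite.symm v.1)) g = 0}

def StabSL {K : Type*} [Field K] {m : ℕ} (f : MvPolynomial (Fin m) K) :
    Set (Matrix (Fin m) (Fin m) K) :=
  {M | M.det = 1 ∧ actDual M f = f}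

namespace OddRecon

variable {K : Type*} [Field K]

lemma bexp_apply_zero (a b : ℕ) : bexp a b 0 = a := rfl
lemma bexp_apply_one (a b : ℕ) : bexp a b 1 = b := rfl

lemma bexp_eq_iff {d : Fin 2 →₀ ℕ} {s t : ℕ} : d = bexp s t ↔ d 0 = s ∧ d 1 = t := by
  constructor
  · rintro rfl; exact ⟨rfl, rfl⟩
  · rintro ⟨h0, h1⟩
    ext i
    fin_cases i
    · simpa [bexp_apply_zero] using h0
    · simpa [bexp_apply_one] using h1

lemma degree_two (d : Fin 2 →₀ ℕ) : d.degree = d 0 + d 1 := by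
  rw [Finsupp.degree_apply]
  rw [Finset.sum_subset (Finset.subset_univ d.support)
    (fun i _ hi => Finsupp.notMem_support_iff.mp hi), Fin.sum_univ_two]

lemma coeff_zero_of_ne {k : ℕ} {f : MvPolynomial (Fin 2) K} (hf : f.IsHomogeneous k)
    {d : Fin 2 →₀ ℕ} (hd : d 0 + d 1 ≠ k) : coeff d f = 0 :=
  hf.coeff_eq_zero (by rw [degree_two]; exact hd)

lemma pderiv_pow_monomial (j : Fin 2) (m : ℕ) (d : Fin 2 →₀ ℕ) (c : K) :
    ((pderiv j).toLinearMap ^ m) (monomial d c)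
      = monomial (d - Finsupp.single j m) (c * ((d j).descFactorial m : ℕ)) := by
  induction m with
  | zero => simp
  | succ m ih =>
    rw [pow_succ', Module.End.mul_apply, ih]
    show pderiv j _ = _
    rw [pderiv_monomial]
    congr 1
    · rw [tsub_tsub, ← Finsupp.single_add]
    · rw [Finsupp.tsub_apply, Finsupp.single_eq_same, Nat.descFactorial_succ]
      push_cast
      ring


lemma pderiv_commute (i j : Fin 2) :
    Commute ((pderiv i).toLinearMap : Module.End K (MvPolynomial (Fin 2) K))
      (pderiv j).toLinearMap := by
  show _ * _ = _ * _
  refine MvPolynomial.linearMap_ext fun d => LinearMap.ext fun c => ?_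
  show pderiv i (pderiv j (monomial d c)) = pderiv j (pderiv i (monomial d c))
  simp only [pderiv_monomial]
  by_cases h : i = j
  · subst h; rfl
  · congr 1
    · rw [tsub_tsub, tsub_tsub, add_comm]
    · rw [Finsupp.tsub_apply, Finsupp.tsub_apply,
        Finsupp.single_eq_of_ne h, Finsupp.single_eq_of_ne (Ne.symm h)]
      push_cast [Nat.sub_zero]
      ring

lemma derivOp_apply (a : Fin 2 →₀ ℕ) (P : MvPolynomial (Fin 2) K) :
    derivOp K a P
      = ((pderiv 0).toLinearMap ^ (a 0)) (((pderiv 1).toLinearMap ^ (a 1)) P) := by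
  have hperm : List.Perm (Finset.univ.toList : List (Fin 2)) [0, 1] := by
    rw [← Multiset.coe_eq_coe,
      show (Finset.univ.toList : List (Fin 2)) = (Finset.univ.val : Multiset (Fin 2)).toList
        from rfl, Multiset.coe_toList]
    decide
  have hpair : List.Pairwise Commute
      (List.map (fun j : Fin 2 => ((pderiv j).toLinearMap ^ (a j) :
        Module.End K (MvPolynomial (Fin 2) K))) [0, 1]) := by
    simp only [List.map_cons, List.map_nil]
    refine List.pairwise_cons.mpr ⟨?_, by simp⟩
    intro l hl
    simp only [List.mem_cons, List.not_mem_nil, or_false] at hl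
    subst hl
    exact ((pderiv_commute 0 1).pow_pow _ _)
  have hprod := ((hperm.map fun j : Fin 2 => ((pderiv j).toLinearMap ^ (a j) :
      Module.End K (MvPolynomial (Fin 2) K))).symm.prod_eq' hpair)
  rw [derivOp, ← hprod]
  simp [List.prod_cons, List.prod_nil, Module.End.mul_apply]


lemma derivOp_monomial (s t : ℕ) (d : Fin 2 →₀ ℕ) (c : K) (h : d 0 + d 1 = s + t) :
    derivOp K (bexp s t) (monomial d c)
      = if d = bexp s t then C ((s.factorial * t.factorial : ℕ) * c) else 0 := by
  rw [derivOp_apply, bexp_apply_zero, bexp_apply_one, pderiv_pow_monomial,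
    pderiv_pow_monomial]
  by_cases hd : d = bexp s t
  · rw [if_pos hd]
    obtain ⟨h0, h1⟩ := bexp_eq_iff.mp hd
    rw [Finsupp.tsub_apply, Finsupp.single_eq_of_ne (by decide), Nat.sub_zero, h0, h1,
      Nat.descFactorial_self, Nat.descFactorial_self]
    have hexp : d - Finsupp.single 1 t - Finsupp.single 0 s = 0 := by
      ext i
      fin_cases i <;>
        simp [Finsupp.tsub_apply, Finsupp.single_apply, h0, h1]
    rw [hexp, monomial_zero']
    push_cast
    ring
  · rw [if_neg hd]
    have : ¬(d 0 = s ∧ d 1 = t) := fun hc => hd (bexp_eq_iff.mpr hc)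
    have hlt : d 1 < t ∨ d 0 < s := by omega
    rcases hlt with hlt | hlt
    · rw [Nat.descFactorial_eq_zero_iff_lt.mpr hlt]
      simp
    · rw [Finsupp.tsub_apply, Finsupp.single_eq_of_ne (by decide), Nat.sub_zero,
        Nat.descFactorial_eq_zero_iff_lt.mpr hlt]
      simp

lemma derivOp_homogeneous {k : ℕ} (s t : ℕ) (hst : s + t = k)
    (f : MvPolynomial (Fin 2) K) (hf : f.IsHomogeneous k) :
    derivOp K (bexp s t) f
      = C ((s.factorial * t.factorial : ℕ) * coeff (bexp s t) f) := by
  conv_lhs => rw [f.as_sum]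
  rw [map_sum]
  have : ∀ d ∈ f.support, derivOp K (bexp s t) (monomial d (coeff d f))
      = if d = bexp s t then C ((s.factorial * t.factorial : ℕ) * coeff d f) else 0 := by
    intro d hd
    apply derivOp_monomial
    have hw := hf (MvPolynomial.mem_support_iff.mp hd)
    have hdeg : d 0 + d 1 = k := by
      rw [← degree_two d, Finsupp.degree_eq_weight_one]
      exact hw
    omega
  rw [Finset.sum_congr rfl this, Finset.sum_ite_eq' f.support (bexp s t)
    (fun d => C ((s.factorial * t.factorial : ℕ) * coeff d f))]
  split_ifs with hmem
  · rfl
  · rw [MvPolynomial.notMem_support_iff.mp hmem]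
    simp


lemma single_add_single (i j : ℕ) : Finsupp.single (0 : Fin 2) i + Finsupp.single 1 j = bexp i j := by
  ext x
  fin_cases x <;> simp [Finsupp.single_apply, bexp_apply_zero, bexp_apply_one]

lemma linpow_eq_sum (α β : K) (k : ℕ) :
    (α • X 0 + β • X 1 : MvPolynomial (Fin 2) K) ^ k
      = ∑ i ∈ Finset.range (k + 1),
          monomial (bexp i (k - i)) (α ^ i * β ^ (k - i) * (k.choose i : K)) := by
  rw [add_pow]
  refine Finset.sum_congr rfl fun i _ => ?_
  rw [smul_pow, smul_pow, X_pow_eq_monomial, X_pow_eq_monomial, smul_monomial,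
    smul_monomial, monomial_mul, single_add_single, ← C_eq_coe_nat,
    show C ((k.choose i : ℕ) : K) = monomial (0 : Fin 2 →₀ ℕ) ((k.choose i : ℕ) : K)
      from C_apply, monomial_mul, add_zero]
  congr 1
  simp only [smul_eq_mul, mul_one]

lemma coeff_linpow (α β : K) {s k : ℕ} (hs : s ≤ k) :
    coeff (bexp s (k - s)) ((α • X 0 + β • X 1 : MvPolynomial (Fin 2) K) ^ k)
      = α ^ s * β ^ (k - s) * (k.choose s : K) := by
  rw [linpow_eq_sum]
  rw [MvPolynomial.coeff_sum]
  have : ∀ i ∈ Finset.range (k + 1),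
      coeff (bexp s (k - s)) (monomial (bexp i (k - i)) (α ^ i * β ^ (k - i) * (k.choose i : K)))
        = if i = s then α ^ i * β ^ (k - i) * (k.choose i : K) else 0 := by
    intro i hi
    rw [coeff_monomial]
    congr 1
    simp only [eq_iff_iff]
    constructor
    · intro h
      have := (bexp_eq_iff.mp h.symm).1
      rw [bexp_apply_zero] at this
      omega
    · rintro rfl
      rfl
  rw [Finset.sum_congr rfl this, Finset.sum_ite_eq' _ s _, if_pos (Finset.mem_range.mpr (by omega))]

lemma linform_homogeneous (α β : K) :
    (α • X 0 + β • X 1 : MvPolynomial (Fin 2) K).IsHomogeneous 1 := by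
  rw [smul_eq_C_mul, smul_eq_C_mul]
  exact (isHomogeneous_C_mul_X α 0).add (isHomogeneous_C_mul_X β 1)

lemma transvect_smul_left (l : ℕ) (c : K) (g f : MvPolynomial (Fin 2) K) :
    transvect l (c • g) f = c • transvect l g f := by
  unfold transvect
  rw [Finset.smul_sum]
  refine Finset.sum_congr rfl fun i _ => ?_
  rw [_root_.map_smul, smul_mul_assoc]
  exact smul_comm _ _ _

lemma transvect_sum_left {ι : Type*} (l : ℕ) (A : Finset ι)
    (g : ι → MvPolynomial (Fin 2) K) (f : MvPolynomial (Fin 2) K) :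
    transvect l (∑ i ∈ A, g i) f = ∑ i ∈ A, transvect l (g i) f := by
  unfold transvect
  rw [Finset.sum_comm]
  refine Finset.sum_congr rfl fun i _ => ?_
  rw [map_sum, Finset.sum_mul, Finset.smul_sum]

lemma transvect_sum_right {ι : Type*} (l : ℕ) (A : Finset ι)
    (g : MvPolynomial (Fin 2) K) (f : ι → MvPolynomial (Fin 2) K) :
    transvect l g (∑ i ∈ A, f i) = ∑ i ∈ A, transvect l g (f i) := by
  unfold transvect
  rw [Finset.sum_comm]
  refine Finset.sum_congr rfl fun i _ => ?_
  rw [map_sum, Finset.mul_sum, Finset.smul_sum]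


lemma eval_monomial_two (x : Fin 2 → K) (d : Fin 2 →₀ ℕ) (c : K) :
    eval x (monomial d c) = c * (x 0 ^ d 0 * x 1 ^ d 1) := by
  rw [eval_monomial, Finsupp.prod_fintype _ _ (fun i => pow_zero (x i)), Fin.prod_univ_two]

lemma transvect_linpow {k : ℕ} (f : MvPolynomial (Fin 2) K) (hf : f.IsHomogeneous k)
    (α β : K) :
    transvect k ((α • X 0 + β • X 1 : MvPolynomial (Fin 2) K) ^ k) f
      = C ((k.factorial : K) ^ 2 * eval ![β, -α] f) := by
  conv_lhs => rw [f.as_sum, transvect_sum_right]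
  conv_rhs => rw [f.as_sum, map_sum (eval ![β, -α]), Finset.mul_sum, map_sum C]
  refine Finset.sum_congr rfl fun d hd => ?_
  have hdeg : d 0 + d 1 = k := by
    rw [← degree_two d, Finsupp.degree_eq_weight_one]
    exact hf (MvPolynomial.mem_support_iff.mp hd)
  set c := coeff d f with hc
  unfold transvect
  have hterm : ∀ s ∈ Finset.range (k + 1),
      ((-1 : K) ^ s * (k.choose s : K)) •
        (derivOp K (bexp s (k - s)) ((α • X 0 + β • X 1 : MvPolynomial (Fin 2) K) ^ k) *
          derivOp K (bexp (k - s) s) (monomial d c))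
      = if s = d 1 then
          ((-1 : K) ^ s * (k.choose s : K)) •
            (C ((s.factorial * (k - s).factorial : ℕ) *
                (α ^ s * β ^ (k - s) * (k.choose s : K))) *
              C (((k - s).factorial * s.factorial : ℕ) * c)) else 0 := by
    intro s hs
    rw [Finset.mem_range] at hs
    have hs' : s ≤ k := by omega
    rw [derivOp_homogeneous s (k - s) (by omega) _ (one_mul k ▸ (linform_homogeneous α β).pow k),
      coeff_linpow α β hs', derivOp_monomial (k - s) s d c (by omega)]
    by_cases h : s = d 1
    · rw [if_pos (bexp_eq_iff.mpr ⟨by omega, by omega⟩), if_pos h]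
    · rw [if_neg ?_, if_neg h, mul_zero, smul_zero]
      intro hcon
      exact h ((bexp_eq_iff.mp hcon).2.symm)
  rw [Finset.sum_congr rfl hterm, Finset.sum_ite_eq' _ (d 1) _,
    if_pos (Finset.mem_range.mpr (by omega))]
  rw [eval_monomial_two]
  simp only [Matrix.cons_val_zero, Matrix.cons_val_one, Matrix.head_cons]
  rw [smul_eq_C_mul, ← map_mul C, ← map_mul C]
  congr 1
  have hd0 : k - d 1 = d 0 := by omega
  have hfac : ((k.choose (d 1)) * (d 1).factorial * (d 0).factorial : K) = (k.factorial : K) := by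
    exact_mod_cast congrArg (Nat.cast (R := K))
      (by rw [← hd0]; exact Nat.choose_mul_factorial_mul_factorial (by omega))
  rw [hd0, neg_pow α (d 1)]
  push_cast
  linear_combination ((k.choose (d 1) : K) * (d 1).factorial * (d 0).factorial
      + (k.factorial : K)) * ((-1 : K) ^ (d 1) * α ^ (d 1) * β ^ (d 0) * c) * hfac



lemma eval_bind₁ (x : Fin 2 → K) (h : Fin 2 → MvPolynomial (Fin 2) K)
    (φ : MvPolynomial (Fin 2) K) :
    eval x (bind₁ h φ) = eval (fun i => eval x (h i)) φ := by
  show eval₂Hom (RingHom.id K) x (bind₁ h φ) = _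
  rw [eval₂Hom_bind₁]
  rfl

lemma eval_polyAct (N : Matrix (Fin 2) (Fin 2) K) (x : Fin 2 → K)
    (P : MvPolynomial (Fin 2) K) :
    eval x (polyAct N P) = eval (fun i => N i 0 * x 0 + N i 1 * x 1) P := by
  rw [polyAct, eval_bind₁]
  have : (fun i => eval x (∑ j, N i j • X j)) = fun i => N i 0 * x 0 + N i 1 * x 1 := by
    funext i
    rw [Fin.sum_univ_two, map_add, smul_eval, smul_eval, eval_X, eval_X]
  rw [this]

lemma keyF [CharZero K] {k : ℕ} (f : MvPolynomial (Fin 2) K) (hf : f.IsHomogeneous k)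
    (a b c d : K) :
    (∑ i ∈ Finset.range (k + 1), (k.choose i : K) •
      (transvect k ((a • X 0 + b • X 1 : MvPolynomial (Fin 2) K) ^ i *
        (c • X 0 + d • X 1) ^ (k - i)) f * monomial (bexp i (k - i)) 1))
    = ((k.factorial : K) ^ 2) • polyAct (![![b, d], ![-a, -c]] : Matrix (Fin 2) (Fin 2) K) f := by
  set u : MvPolynomial (Fin 2) K := a • X 0 + b • X 1 with hu
  set v : MvPolynomial (Fin 2) K := c • X 0 + d • X 1 with hv
  apply MvPolynomial.funext
  intro x
  have hsum : (∑ i ∈ Finset.range (k + 1), ((k.choose i : K) * x 0 ^ i * x 1 ^ (k - i)) •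
        transvect k (u ^ i * v ^ (k - i)) f)
      = transvect k (((a * x 0 + c * x 1) • X 0 + (b * x 0 + d * x 1) • X 1
          : MvPolynomial (Fin 2) K) ^ k) f := by
    have hw : ((a * x 0 + c * x 1) • X 0 + (b * x 0 + d * x 1) • X 1
        : MvPolynomial (Fin 2) K) = x 0 • u + x 1 • v := by
      rw [hu, hv]
      module
    rw [hw, add_pow, transvect_sum_left]
    refine Finset.sum_congr rfl fun i _ => ?_
    have hterm : (x 0 • u) ^ i * (x 1 • v) ^ (k - i)
          * ((k.choose i : ℕ) : MvPolynomial (Fin 2) K)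
        = ((k.choose i : K) * x 0 ^ i * x 1 ^ (k - i)) • (u ^ i * v ^ (k - i)) := by
      rw [smul_pow, smul_pow, ← C_eq_coe_nat, smul_eq_C_mul, smul_eq_C_mul, smul_eq_C_mul]
      simp only [C_mul]
      ring
    rw [hterm, transvect_smul_left]
  have h1 : eval x (∑ i ∈ Finset.range (k + 1), (k.choose i : K) •
        (transvect k (u ^ i * v ^ (k - i)) f * monomial (bexp i (k - i)) 1))
      = eval x (∑ i ∈ Finset.range (k + 1), ((k.choose i : K) * x 0 ^ i * x 1 ^ (k - i)) •
        transvect k (u ^ i * v ^ (k - i)) f) := by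
    rw [map_sum, map_sum]
    refine Finset.sum_congr rfl fun i _ => ?_
    simp only [smul_eval, _root_.map_mul, eval_monomial_two, bexp_apply_zero, bexp_apply_one]
    ring
  rw [h1, hsum, transvect_linpow f hf, eval_C, smul_eval]
  erw [eval_polyAct]
  have hvec : (fun i => (![![b, d], ![-a, -c]] : Matrix (Fin 2) (Fin 2) K) i 0 * x 0
      + ![![b, d], ![-a, -c]] i 1 * x 1) = ![b * x 0 + d * x 1, -(a * x 0 + c * x 1)] := by
    funext i
    fin_cases i <;> simp [Fin.mk_zero, Fin.mk_one] <;> ring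
  rw [hvec]


lemma homog1_repr (p : MvPolynomial (Fin 2) K) (hp : p.IsHomogeneous 1) :
    p = coeff (bexp 1 0) p • X 0 + coeff (bexp 0 1) p • X 1 := by
  have hs0 : (Finsupp.single (0 : Fin 2) 1) = bexp 1 0 := by
    ext i
    fin_cases i <;> simp [Finsupp.single_apply, bexp_apply_zero, bexp_apply_one] <;> rfl
  have hs1 : (Finsupp.single (1 : Fin 2) 1) = bexp 0 1 := by
    ext i
    fin_cases i <;> simp [Finsupp.single_apply, bexp_apply_zero, bexp_apply_one] <;> rfl
  have hX0 : (X 0 : MvPolynomial (Fin 2) K) = monomial (bexp 1 0) 1 := by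
    rw [← pow_one (X 0 : MvPolynomial (Fin 2) K), X_pow_eq_monomial, hs0]
  have hX1 : (X 1 : MvPolynomial (Fin 2) K) = monomial (bexp 0 1) 1 := by
    rw [← pow_one (X 1 : MvPolynomial (Fin 2) K), X_pow_eq_monomial, hs1]
  have hne : (bexp 1 0 : Fin 2 →₀ ℕ) ≠ bexp 0 1 := by
    intro hc
    have := (bexp_eq_iff.mp hc).1
    simp [bexp_apply_zero] at this
  apply MvPolynomial.ext
  intro m
  rw [coeff_add, coeff_smul, coeff_smul, hX0, hX1, coeff_monomial, coeff_monomial]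
  by_cases h0 : (bexp 1 0 : Fin 2 →₀ ℕ) = m
  · rw [if_pos h0, if_neg (fun hc => hne (h0.trans hc.symm)), ← h0]
    simp
  · rw [if_neg h0]
    by_cases h1 : (bexp 0 1 : Fin 2 →₀ ℕ) = m
    · rw [if_pos h1, ← h1]
      simp
    · rw [if_neg h1]
      have hm : m 0 + m 1 ≠ 1 := by
        intro hc
        have c0 : m 0 = 1 ∧ m 1 = 0 ∨ m 0 = 0 ∧ m 1 = 1 := by omega
        rcases c0 with ⟨u0, u1⟩ | ⟨u0, u1⟩
        · exact h0 (bexp_eq_iff.mpr ⟨u0, u1⟩).symm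
        · exact h1 (bexp_eq_iff.mpr ⟨u0, u1⟩).symm
      rw [coeff_zero_of_ne hp hm]
      simp

lemma eval_smul_homog {k : ℕ} (f : MvPolynomial (Fin 2) K) (hf : f.IsHomogeneous k)
    (e : K) (y : Fin 2 → K) :
    eval (fun i => e * y i) f = e ^ k * eval y f := by
  conv_lhs => rw [f.as_sum]
  conv_rhs => rw [f.as_sum]
  rw [map_sum, map_sum, Finset.mul_sum]
  refine Finset.sum_congr rfl fun d hd => ?_
  have hdeg : d 0 + d 1 = k := by
    rw [← degree_two d, Finsupp.degree_eq_weight_one]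
    exact hf (MvPolynomial.mem_support_iff.mp hd)
  rw [eval_monomial_two, eval_monomial_two, mul_pow, mul_pow, ← hdeg, pow_add]
  ring

lemma polyAct_smul [CharZero K] {k : ℕ} (f : MvPolynomial (Fin 2) K)
    (hf : f.IsHomogeneous k) (e : K) (N : Matrix (Fin 2) (Fin 2) K) :
    polyAct (e • N) f = e ^ k • polyAct N f := by
  apply MvPolynomial.funext
  intro x
  rw [eval_polyAct, smul_eval, eval_polyAct]
  have hfun : (fun i => (e • N) i 0 * x 0 + (e • N) i 1 * x 1)
      = fun i => e * (N i 0 * x 0 + N i 1 * x 1) := by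
    funext i
    simp only [Matrix.smul_apply, smul_eq_mul]
    ring
  rw [hfun, eval_smul_homog f hf]

end OddRecon


/-- let `f` be a stable binary form of odd degree `k ≥ 5` with
trivial reduced stabilizer, and let `q₀, q₁` be covariants of order `1` of
`Sym^k(W*)` linearly independent at `f`.  Then
`f̃ = ∑ᵢ binom(k,i)·(q₀(f)^i q₁(f)^{k−i}, f)_k·X₀^i X₁^{k−i}` is
`GL₂`-equivalent to `f`. -/
theorem odd_binary_reconstruction
    (K : Type*) [Field K] [IsAlgClosed K] [CharZero K]
    (k : ℕ) (hk5 : 5 ≤ k) (hkodd : Odd k)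
    (f : MvPolynomial (Fin 2) K) (hf : f.IsHomogeneous k)
    (hclosed : ZClosed k (OrbitSL f))
    (hfinite : (StabSL f).Finite)
    (htriv : ∀ M ∈ StabSL f, ∃ lam : K,
      M = lam • (1 : Matrix (Fin 2) (Fin 2) K) ∧ lam ^ k = 1 ∧ lam ^ 2 = 1)
    (q : Fin 2 → (MvPolynomial (Fin 2) K → MvPolynomial (Fin 2) K))
    (dq : Fin 2 → ℕ)
    (hq : ∀ i, IsCovariant k 1 (dq i) (q i))
    (hli : LinearIndependent K (fun i => q i f)) :
    ∃ M : Matrix (Fin 2) (Fin 2) K, IsUnit M.det ∧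
      (∑ i ∈ Finset.range (k + 1),
          (k.choose i : K) •
            (transvect k ((q 0 f) ^ i * (q 1 f) ^ (k - i)) f *
              monomial (bexp i (k - i)) 1))
        = polyAct M f := by
  classical
  have hf0 : (q 0 f).IsHomogeneous 1 := (hq 0).1 f hf
  have hf1 : (q 1 f).IsHomogeneous 1 := (hq 1).1 f hf
  set a := coeff (bexp 1 0) (q 0 f) with ha
  set b := coeff (bexp 0 1) (q 0 f) with hb
  set c := coeff (bexp 1 0) (q 1 f) with hc
  set d := coeff (bexp 0 1) (q 1 f) with hd
  have hu : q 0 f = a • X 0 + b • X 1 := OddRecon.homog1_repr _ hf0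
  have hv : q 1 f = c • X 0 + d • X 1 := OddRecon.homog1_repr _ hf1
  have h2 := Fintype.linearIndependent_iff.mp hli
  have hdet : a * d - b * c ≠ 0 := by
    intro hz
    have e1 : ∀ i, (![d, -b] : Fin 2 → K) i = 0 := by
      apply h2
      rw [Fin.sum_univ_two]
      simp only [Matrix.cons_val_zero, Matrix.cons_val_one, Matrix.head_cons]
      rw [hu, hv, smul_add, smul_add, smul_smul, smul_smul, smul_smul, smul_smul,
        add_add_add_comm, ← add_smul, ← add_smul,
        show d * a + -b * c = 0 by rw [← hz]; ring,
        show d * b + -b * d = 0 by ring]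
      simp
    have hbz : b = 0 := by
      have := e1 1
      simp only [Matrix.cons_val_one, Matrix.head_cons, Matrix.cons_val_zero, neg_eq_zero] at this
      exact this
    have hdz : d = 0 := by
      have := e1 0
      simpa using this
    have e2 : ∀ i, (![c, -a] : Fin 2 → K) i = 0 := by
      apply h2
      rw [Fin.sum_univ_two]
      simp only [Matrix.cons_val_zero, Matrix.cons_val_one, Matrix.head_cons]
      rw [hu, hv, hbz, hdz, smul_add, smul_add, smul_smul, smul_smul, smul_smul, smul_smul,
        add_add_add_comm, ← add_smul, ← add_smul,
        show c * a + -a * c = 0 by ring,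
        show c * 0 + -a * 0 = 0 by ring]
      simp
    have haz : a = 0 := by
      have := e2 1
      simp only [Matrix.cons_val_one, Matrix.head_cons, Matrix.cons_val_zero, neg_eq_zero] at this
      exact this
    have : q 0 f = 0 := by rw [hu, haz, hbz]; simp
    exact hli.ne_zero 0 this
  obtain ⟨e, he⟩ := IsAlgClosed.exists_pow_nat_eq ((k.factorial : K) ^ 2)
    (show 0 < k by omega)
  have hfacne : ((k.factorial : K)) ^ 2 ≠ 0 :=
    pow_ne_zero _ (Nat.cast_ne_zero.mpr (Nat.factorial_ne_zero k))
  have he0 : e ≠ 0 := by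
    intro h
    rw [h, zero_pow (show k ≠ 0 by omega)] at he
    exact hfacne he.symm
  refine ⟨e • (![![b, d], ![-a, -c]] : Matrix (Fin 2) (Fin 2) K), ?_, ?_⟩
  · erw [Matrix.det_smul, Matrix.det_fin_two]
    simp only [Matrix.smul_apply, Matrix.cons_val_zero, Matrix.cons_val_one, Matrix.head_cons,
      Matrix.cons_val', Matrix.empty_val', Matrix.cons_val_fin_one, Matrix.head_fin_const,
      smul_eq_mul]
    apply isUnit_iff_ne_zero.mpr
    intro hz
    have hcard : (Fintype.card (Fin 2)) = 2 := by simp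
    rw [hcard] at hz
    rcases mul_eq_zero.mp hz with h | h
    · exact (pow_ne_zero 2 he0) h
    · exact hdet (by linear_combination h)
  · rw [hu, hv, OddRecon.keyF f hf a b c d, ← he]
    exact (OddRecon.polyAct_smul f hf _ _).symm
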